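/- arXiv:1805.03335 — 7 statements merged into one kernel-verified Lean document; each statement's English description precedes it below -/
import Mathlib

section
/- For every k ≥ 0, the perfect domination number of the (6k+1)×2 knights graph equals 4k+2. -/
def knightAdj (p q : ℤ × ℤ) : Prop :=
  (|p.1 - q.1| = 1 ∧ |p.2 - q.2| = 2) ∨ (|p.1 - q.1| = 2 ∧ |p.2 - q.2| = 1)

lemma knightAdj_symm {p q : ℤ × ℤ} (h : knightAdj p q) : knightAdj q p := by
  unfold knightAdj at *
  rcases h with ⟨h1, h2⟩ | ⟨h1, h2⟩
  · left; rw [abs_sub_comm, abs_sub_comm q.2]; exact ⟨h1, h2⟩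
  · right; rw [abs_sub_comm, abs_sub_comm q.2]; exact ⟨h1, h2⟩

lemma knightAdj_irrefl (p : ℤ × ℤ) : ¬ knightAdj p p := by
  unfold knightAdj; simp

/-- The knights graph on an `n`-column, `m`-row chessboard. -/
def KN (n m : ℕ) : SimpleGraph (Fin n × Fin m) where
  Adj p q := knightAdj ((p.1 : ℤ), (p.2 : ℤ)) ((q.1 : ℤ), (q.2 : ℤ))
  symm := ⟨fun _ _ h => knightAdj_symm h⟩
  loopless := ⟨fun p => knightAdj_irrefl _⟩

/-- The infinite knights graph on `ℤ × ℤ`. -/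
def KNZZ : SimpleGraph (ℤ × ℤ) where
  Adj := knightAdj
  symm := ⟨fun _ _ h => knightAdj_symm h⟩
  loopless := ⟨knightAdj_irrefl⟩

/-- The quarter-infinite knights graph on `ℕ × ℕ`. -/
def KNNN : SimpleGraph (ℕ × ℕ) where
  Adj p q := knightAdj ((p.1 : ℤ), (p.2 : ℤ)) ((q.1 : ℤ), (q.2 : ℤ))
  symm := ⟨fun _ _ h => knightAdj_symm h⟩
  loopless := ⟨fun p => knightAdj_irrefl _⟩

/-- The half-plane knights graph on `ℤ × ℕ`. -/
def KNZN : SimpleGraph (ℤ × ℕ) where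
  Adj p q := knightAdj (p.1, (p.2 : ℤ)) (q.1, (q.2 : ℤ))
  symm := ⟨fun _ _ h => knightAdj_symm h⟩
  loopless := ⟨fun p => knightAdj_irrefl _⟩

/-- `S` is a perfect dominating set of `G`: every vertex not in `S` is adjacent to
exactly one vertex of `S`. -/
def IsPerfDomSet {V : Type*} (G : SimpleGraph V) (S : Set V) : Prop :=
  ∀ v ∉ S, ∃! u, u ∈ S ∧ G.Adj v u

/-- The perfect domination number of `G`. -/
noncomputable def perfDomNum {V : Type*} (G : SimpleGraph V) : ℕ :=
  sInf {k | ∃ S : Set V, IsPerfDomSet G S ∧ S.ncard = k}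

lemma adj_iff {k : ℕ} (v w : Fin (6*k+1) × Fin 2) :
    (KN (6*k+1) 2).Adj v w ↔
      ((v.1:ℕ) + 2 = (w.1:ℕ) ∨ (w.1:ℕ) + 2 = (v.1:ℕ)) ∧ (v.2:ℕ) + (w.2:ℕ) = 1 := by
  show knightAdj ((v.1:ℤ),(v.2:ℤ)) ((w.1:ℤ),(w.2:ℤ)) ↔ _
  unfold knightAdj
  have h2 := v.2.isLt; have h2' := w.2.isLt
  simp only [abs_eq (by norm_num : (0:ℤ) ≤ 1), abs_eq (by norm_num : (0:ℤ) ≤ 2)]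
  constructor
  · rintro (⟨ha, hb⟩ | ⟨ha, hb⟩) <;> omega
  · rintro ⟨ha, hb⟩; right; omega

-- the explicit perfect dominating set: all columns divisible by 3
def S0 (k : ℕ) : Set (Fin (6*k+1) × Fin 2) := {v | (v.1 : ℕ) % 3 = 0}

lemma S0_perf (k : ℕ) : IsPerfDomSet (KN (6*k+1) 2) (S0 k) := by
  intro v hv
  simp only [S0, Set.mem_setOf_eq] at hv
  have hx := v.1.isLt
  have hy := v.2.isLt
  by_cases h1 : (v.1 : ℕ) % 3 = 1
  · refine ⟨(⟨(v.1:ℕ) + 2, by omega⟩, ⟨1 - (v.2:ℕ), by omega⟩), ⟨by simp [S0]; omega, ?_⟩, ?_⟩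
    · rw [adj_iff]; constructor
      · left; simp
      · simp; omega
    · rintro u ⟨hu, hadj⟩
      rw [adj_iff] at hadj
      simp only [S0, Set.mem_setOf_eq] at hu
      have := u.1.isLt; have := u.2.isLt
      ext
      · simp; omega
      · simp; omega
  · have h2 : (v.1 : ℕ) % 3 = 2 := by omega
    refine ⟨(⟨(v.1:ℕ) - 2, by omega⟩, ⟨1 - (v.2:ℕ), by omega⟩), ⟨by simp [S0]; omega, ?_⟩, ?_⟩
    · rw [adj_iff]; constructor
      · right; simp; omega
      · simp; omega
    · rintro u ⟨hu, hadj⟩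
      rw [adj_iff] at hadj
      simp only [S0, Set.mem_setOf_eq] at hu
      have := u.1.isLt; have := u.2.isLt
      ext
      · simp; omega
      · simp; omega

lemma S0_card (k : ℕ) : (S0 k).ncard = 4 * k + 2 := by
  have hf : Function.Injective
      (fun p : Fin (2*k+1) × Fin 2 => ((⟨3 * (p.1:ℕ), by omega⟩ : Fin (6*k+1)), p.2)) := by
    rintro ⟨a, b⟩ ⟨c, d⟩ h
    simp only [Prod.mk.injEq, Fin.mk.injEq] at h
    obtain ⟨h1, h2⟩ := h
    ext <;> simp <;> omega
  have hS : S0 k = (fun p : Fin (2*k+1) × Fin 2 =>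
      ((⟨3 * (p.1:ℕ), by omega⟩ : Fin (6*k+1)), p.2)) '' Set.univ := by
    ext ⟨x, y⟩
    simp only [S0, Set.mem_setOf_eq, Set.image_univ, Set.mem_range, Prod.mk.injEq]
    constructor
    · intro h
      exact ⟨(⟨(x:ℕ)/3, by omega⟩, y), by refine ⟨?_, rfl⟩; ext; simp; omega⟩
    · rintro ⟨⟨a, b⟩, h1, h2⟩
      have : (x : ℕ) = 3 * (a : ℕ) := by rw [← h1]
      omega
  rw [hS, Set.ncard_image_of_injective _ hf, Set.ncard_univ]
  simp [Nat.card_eq_fintype_card]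
  ring

def cls {k : ℕ} (v : Fin (6*k+1) × Fin 2) : ℕ × ℕ :=
  ((v.1:ℕ) % 2, ((v.1:ℕ)/2 + (v.2:ℕ)) % 2)

lemma class_card (k ε j : ℕ) (hε : ε < 2) (hj : j < 2) :
    (Finset.univ.filter (fun v : Fin (6*k+1) × Fin 2 => cls v = (ε, j))).card
      = 3*k + 1 - ε := by
  rw [show 3*k + 1 - ε = (Finset.range (3*k+1-ε)).card from (Finset.card_range _).symm]
  refine Finset.card_bij' (fun v _ => (v.1:ℕ)/2)
    (fun m hm => (⟨2*m+ε, by simp only [Finset.mem_range] at hm; omega⟩,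
                  ⟨(j + m) % 2, by omega⟩)) ?_ ?_ ?_ ?_
  · intro v hv
    simp only [Finset.mem_filter, Finset.mem_univ, true_and, cls, Prod.mk.injEq] at hv
    have := v.1.isLt
    simp only [Finset.mem_range]
    omega
  · intro m hm
    simp only [Finset.mem_range] at hm
    simp only [Finset.mem_filter, Finset.mem_univ, true_and, cls, Prod.mk.injEq]
    constructor <;> omega
  · intro v hv
    simp only [Finset.mem_filter, Finset.mem_univ, true_and, cls, Prod.mk.injEq] at hv
    have := v.2.isLt
    refine Prod.ext (Fin.ext ?_) (Fin.ext ?_) <;> simp <;> omega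
  · intro m hm
    simp only [Finset.mem_range] at hm
    simp only []
    omega

lemma lower_bound (k : ℕ) (S : Set (Fin (6*k+1) × Fin 2))
    (hS : IsPerfDomSet (KN (6*k+1) 2) S) : 4*k+2 ≤ S.ncard := by
  classical
  have hcls : ∀ v w : Fin (6*k+1) × Fin 2, (KN (6*k+1) 2).Adj v w → cls v = cls w := by
    intro v w h
    rw [adj_iff] at h
    simp only [cls, Prod.mk.injEq]
    constructor <;> omega
  have hg : ∀ v : Fin (6*k+1) × Fin 2, ∃ u, u ∈ S ∧ (v = u ∨ (KN (6*k+1) 2).Adj v u) := by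
    intro v
    by_cases h : v ∈ S
    · exact ⟨v, h, Or.inl rfl⟩
    · obtain ⟨u, ⟨hu1, hu2⟩, _⟩ := hS v h
      exact ⟨u, hu1, Or.inr hu2⟩
  choose g hgS hgadj using hg
  have hgcls : ∀ v, cls (g v) = cls v := by
    intro v; rcases hgadj v with h | h
    · rw [← h]
    · exact (hcls v (g v) h).symm
  have hfin : S.Finite := Set.toFinite S
  set Sf := hfin.toFinset with hSfdef
  -- each fiber of g has at most 3 elements
  have fiber_bound : ∀ (c : ℕ × ℕ) (b : Fin (6*k+1) × Fin 2),
      ((Finset.univ.filter (fun v => cls v = c)).filter (fun v => g v = b)).card ≤ 3 := by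
    intro c b
    rw [show (3:ℕ) = (Finset.range 3).card from (Finset.card_range _).symm]
    apply Finset.card_le_card_of_injOn
        (fun v => if v = b then 0 else if (v.1:ℕ) < (b.1:ℕ) then 1 else 2)
    · intro a _
      simp only [Finset.mem_coe, Finset.mem_range]
      split_ifs <;> omega
    · intro v hv w hw hvw
      simp only [Finset.coe_filter, Set.mem_setOf_eq, Finset.mem_filter,
        Finset.mem_univ, true_and] at hv hw
      have hv2 := hv.2; have hw2 := hw.2
      beta_reduce at hvw
      by_cases hvb : v = b
      · by_cases hwb : w = b
        · rw [hvb, hwb]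
        · exfalso
          rw [if_pos hvb, if_neg hwb] at hvw
          split_ifs at hvw <;> omega
      · by_cases hwb : w = b
        · exfalso
          rw [if_neg hvb, if_pos hwb] at hvw
          split_ifs at hvw <;> omega
        · have hv3 : (KN (6*k+1) 2).Adj v b := by
            rcases hgadj v with h | h
            · exact absurd (h.trans hv2) hvb
            · rwa [hv2] at h
          have hw3 : (KN (6*k+1) 2).Adj w b := by
            rcases hgadj w with h | h
            · exact absurd (h.trans hw2) hwb
            · rwa [hw2] at h
          rw [adj_iff] at hv3 hw3
          simp only [if_neg hvb, if_neg hwb] at hvw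
          have := v.2.isLt; have := w.2.isLt; have := b.2.isLt
          split_ifs at hvw <;>
            refine Prod.ext (Fin.ext ?_) (Fin.ext ?_) <;> omega
  -- per-class covering inequality
  have key : ∀ c : ℕ × ℕ,
      (Finset.univ.filter (fun v : Fin (6*k+1) × Fin 2 => cls v = c)).card
        ≤ 3 * (Sf.filter (fun v => cls v = c)).card := by
    intro c
    have hmap : ∀ v ∈ (Finset.univ.filter (fun v : Fin (6*k+1) × Fin 2 => cls v = c)),
        g v ∈ Sf.filter (fun v => cls v = c) := by
      intro v hv
      simp only [Finset.mem_filter, Finset.mem_univ, true_and] at hv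
      simp only [Finset.mem_filter, hSfdef, Set.Finite.mem_toFinset]
      exact ⟨hgS v, by rw [hgcls v, hv]⟩
    rw [Finset.card_eq_sum_card_fiberwise hmap]
    calc ∑ b ∈ Sf.filter (fun v => cls v = c),
          ((Finset.univ.filter (fun v : Fin (6*k+1) × Fin 2 => cls v = c)).filter
            (fun v => g v = b)).card
        ≤ ∑ _b ∈ Sf.filter (fun v => cls v = c), 3 :=
          Finset.sum_le_sum (fun b _ => fiber_bound c b)
      _ = 3 * (Sf.filter (fun v => cls v = c)).card := by
          rw [Finset.sum_const, smul_eq_mul, mul_comm]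
  -- sum over the four classes
  have hSfcard : Sf.card = ∑ c ∈ ({(0,0),(0,1),(1,0),(1,1)} : Finset (ℕ×ℕ)),
      (Sf.filter (fun v => cls v = c)).card := by
    apply Finset.card_eq_sum_card_fiberwise
    intro v _
    simp only [Finset.mem_coe, Finset.coe_insert, Finset.coe_singleton, Set.mem_insert_iff,
      Set.mem_singleton_iff, Finset.mem_insert, Finset.mem_singleton, cls, Prod.mk.injEq]
    omega
  rw [Set.ncard_eq_toFinset_card S hfin, ← hSfdef, hSfcard]
  rw [show ({(0,0),(0,1),(1,0),(1,1)} : Finset (ℕ×ℕ)) =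
      insert (0,0) (insert (0,1) (insert (1,0) {(1,1)})) from rfl]
  rw [Finset.sum_insert (by decide), Finset.sum_insert (by decide),
      Finset.sum_insert (by decide), Finset.sum_singleton]
  have h00 := key (0,0); have h01 := key (0,1)
  have h10 := key (1,0); have h11 := key (1,1)
  rw [class_card k 0 0 (by norm_num) (by norm_num)] at h00
  rw [class_card k 0 1 (by norm_num) (by norm_num)] at h01
  rw [class_card k 1 0 (by norm_num) (by norm_num)] at h10
  rw [class_card k 1 1 (by norm_num) (by norm_num)] at h11
  omega

theorem stmt1 (k : ℕ) : perfDomNum (KN (6 * k + 1) 2) = 4 * k + 2 := by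
  have hmem : (4*k+2) ∈ {m | ∃ S, IsPerfDomSet (KN (6*k+1) 2) S ∧ S.ncard = m} :=
    ⟨S0 k, S0_perf k, S0_card k⟩
  apply le_antisymm
  · exact Nat.sInf_le hmem
  · apply le_csInf ⟨_, hmem⟩
    rintro m ⟨S, hSp, rfl⟩
    exact lower_bound k S hSp
end

section
/- For every k ≥ 1, the perfect domination number of the 8k×3 knights graph is at most 10k. -/
def patC : Fin 10 → ℕ := ![0,2,2,2,3,4,4,5,6,6]
def patR : Fin 10 → ℕ := ![1,0,1,2,0,1,2,0,0,2]

lemma patC_lt (j : Fin 10) : patC j < 8 := by fin_cases j <;> decide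
lemma patR_lt (j : Fin 10) : patR j < 3 := by fin_cases j <;> decide
lemma pat_cases : ∀ j : Fin 10, (patC j = 0 ∧ patR j = 1) ∨ patC j = 2 ∨
    (patC j = 3 ∧ patR j = 0) ∨ (patC j = 4 ∧ (patR j = 1 ∨ patR j = 2)) ∨
    (patC j = 5 ∧ patR j = 0) ∨ (patC j = 6 ∧ (patR j = 0 ∨ patR j = 2)) := by decide

lemma pat_inj : ∀ j j' : Fin 10, patC j = patC j' → patR j = patR j' → j = j' := by decide

def g (k : ℕ) (ij : Fin k × Fin 10) : Fin (8 * k) × Fin 3 :=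
  (⟨8 * ij.1.val + patC ij.2, by
      have h1 := ij.1.isLt; have h2 := patC_lt ij.2; omega⟩,
   ⟨patR ij.2, patR_lt ij.2⟩)

lemma g_inj (k : ℕ) : Function.Injective (g k) := by
  rintro ⟨i, j⟩ ⟨i', j'⟩ h
  have h1 : 8 * i.val + patC j = 8 * i'.val + patC j' ∧ patR j = patR j' := by
    simpa [g, Prod.ext_iff, Fin.ext_iff] using h
  have hc := patC_lt j; have hc' := patC_lt j'
  have hcc : patC j = patC j' ∧ i.val = i'.val := by omega
  have hjj : j = j' := pat_inj _ _ hcc.1 h1.2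
  simp [Prod.ext_iff, Fin.ext_iff, hcc.2, hjj]

/-- Membership in the periodic pattern, characterized arithmetically. -/
lemma memS (k : ℕ) (p : Fin (8 * k) × Fin 3) :
    p ∈ Finset.image (g k) Finset.univ ↔
      ((p.1.val % 8 = 0 ∧ p.2.val = 1) ∨ p.1.val % 8 = 2 ∨
       (p.1.val % 8 = 3 ∧ p.2.val = 0) ∨
       (p.1.val % 8 = 4 ∧ (p.2.val = 1 ∨ p.2.val = 2)) ∨
       (p.1.val % 8 = 5 ∧ p.2.val = 0) ∨
       (p.1.val % 8 = 6 ∧ (p.2.val = 0 ∨ p.2.val = 2))) := by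
  constructor
  · intro h
    obtain ⟨⟨i, j⟩, -, rfl⟩ := Finset.mem_image.1 h
    have hp := pat_cases j
    have hlt := patC_lt j
    simp only [g]
    omega
  · intro h
    have hx := p.1.isLt
    have key : ∀ c r : ℕ, (∃ j : Fin 10, patC j = c ∧ patR j = r) →
        p.1.val % 8 = c → p.2.val = r → p ∈ Finset.image (g k) Finset.univ := by
      rintro c r ⟨j, rfl, rfl⟩ hc hr
      refine Finset.mem_image.2 ⟨(⟨p.1.val / 8, by have := patC_lt j; omega⟩, j),
        Finset.mem_univ _, ?_⟩
      simp only [g, Prod.ext_iff, Fin.ext_iff]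
      constructor <;> omega
    rcases h with ⟨h1, h2⟩ | h1 | ⟨h1, h2⟩ | ⟨h1, h2 | h2⟩ | ⟨h1, h2⟩ | ⟨h1, h2 | h2⟩
    · exact key 0 1 (by decide) h1 h2
    · rcases (by omega : p.2.val = 0 ∨ p.2.val = 1 ∨ p.2.val = 2) with h2 | h2 | h2
      · exact key 2 0 (by decide) h1 h2
      · exact key 2 1 (by decide) h1 h2
      · exact key 2 2 (by decide) h1 h2
    · exact key 3 0 (by decide) h1 h2
    · exact key 4 1 (by decide) h1 h2
    · exact key 4 2 (by decide) h1 h2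
    · exact key 5 0 (by decide) h1 h2
    · exact key 6 0 (by decide) h1 h2
    · exact key 6 2 (by decide) h1 h2

lemma adjKN {n m : ℕ} (p q : Fin n × Fin m) :
    (KN n m).Adj p q ↔
      (((p.1.val + 1 = q.1.val ∨ q.1.val + 1 = p.1.val) ∧
        (p.2.val + 2 = q.2.val ∨ q.2.val + 2 = p.2.val)) ∨
       ((p.1.val + 2 = q.1.val ∨ q.1.val + 2 = p.1.val) ∧
        (p.2.val + 1 = q.2.val ∨ q.2.val + 1 = p.2.val))) := by
  show knightAdj _ _ ↔ _
  unfold knightAdj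
  simp only [abs_eq (by norm_num : (0:ℤ) ≤ 1), abs_eq (by norm_num : (0:ℤ) ≤ 2)]
  constructor <;> intro h <;> omega

set_option maxHeartbeats 1000000 in
theorem stmt3 (k : ℕ) (hk : 1 ≤ k) : perfDomNum (KN (8 * k) 3) ≤ 10 * k := by
  apply Nat.sInf_le
  refine ⟨↑(Finset.image (g k) Finset.univ), ?_, ?_⟩
  · rintro ⟨a, b⟩ hv
    rw [Finset.mem_coe, memS] at hv
    dsimp only at hv
    have hx : a.val < 8 * k := a.isLt
    have hy : b.val < 3 := b.isLt
    refine existsUnique_of_exists_of_unique ?_ ?_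
    · rcases (by omega : a.val % 8 = 0 ∨ a.val % 8 = 1 ∨ a.val % 8 = 2 ∨ a.val % 8 = 3 ∨
        a.val % 8 = 4 ∨ a.val % 8 = 5 ∨ a.val % 8 = 6 ∨ a.val % 8 = 7) with
          h | h | h | h | h | h | h | h <;>
      rcases (by omega : b.val = 0 ∨ b.val = 1 ∨ b.val = 2) with h' | h' | h'
      · exact ⟨(⟨a.val+2, by omega⟩, ⟨1, by omega⟩), (memS k _).2 (by dsimp only; omega), (adjKN _ _).2 (by dsimp only; omega)⟩
      · exact absurd (by omega) hv
      · exact ⟨(⟨a.val+2, by omega⟩, ⟨1, by omega⟩), (memS k _).2 (by dsimp only; omega), (adjKN _ _).2 (by dsimp only; omega)⟩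
      · exact ⟨(⟨a.val+1, by omega⟩, ⟨2, by omega⟩), (memS k _).2 (by dsimp only; omega), (adjKN _ _).2 (by dsimp only; omega)⟩
      · exact ⟨(⟨a.val+2, by omega⟩, ⟨0, by omega⟩), (memS k _).2 (by dsimp only; omega), (adjKN _ _).2 (by dsimp only; omega)⟩
      · exact ⟨(⟨a.val+1, by omega⟩, ⟨0, by omega⟩), (memS k _).2 (by dsimp only; omega), (adjKN _ _).2 (by dsimp only; omega)⟩
      · exact absurd (by omega) hv
      · exact absurd (by omega) hv
      · exact absurd (by omega) hv
      · exact absurd (by omega) hv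
      · exact ⟨(⟨a.val+2, by omega⟩, ⟨0, by omega⟩), (memS k _).2 (by dsimp only; omega), (adjKN _ _).2 (by dsimp only; omega)⟩
      · exact ⟨(⟨a.val-1, by omega⟩, ⟨0, by omega⟩), (memS k _).2 (by dsimp only; omega), (adjKN _ _).2 (by dsimp only; omega)⟩
      · exact ⟨(⟨a.val-2, by omega⟩, ⟨1, by omega⟩), (memS k _).2 (by dsimp only; omega), (adjKN _ _).2 (by dsimp only; omega)⟩
      · exact absurd (by omega) hv
      · exact absurd (by omega) hv
      · exact absurd (by omega) hv
      · exact ⟨(⟨a.val-2, by omega⟩, ⟨0, by omega⟩), (memS k _).2 (by dsimp only; omega), (adjKN _ _).2 (by dsimp only; omega)⟩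
      · exact ⟨(⟨a.val+1, by omega⟩, ⟨0, by omega⟩), (memS k _).2 (by dsimp only; omega), (adjKN _ _).2 (by dsimp only; omega)⟩
      · exact absurd (by omega) hv
      · exact ⟨(⟨a.val-2, by omega⟩, ⟨2, by omega⟩), (memS k _).2 (by dsimp only; omega), (adjKN _ _).2 (by dsimp only; omega)⟩
      · exact absurd (by omega) hv
      · exact ⟨(⟨a.val-1, by omega⟩, ⟨2, by omega⟩), (memS k _).2 (by dsimp only; omega), (adjKN _ _).2 (by dsimp only; omega)⟩
      · exact ⟨(⟨a.val-2, by omega⟩, ⟨0, by omega⟩), (memS k _).2 (by dsimp only; omega), (adjKN _ _).2 (by dsimp only; omega)⟩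
      · exact ⟨(⟨a.val-1, by omega⟩, ⟨0, by omega⟩), (memS k _).2 (by dsimp only; omega), (adjKN _ _).2 (by dsimp only; omega)⟩
    · rintro ⟨a₁, b₁⟩ ⟨a₂, b₂⟩ ⟨hm₁, hadj₁⟩ ⟨hm₂, hadj₂⟩
      rw [Finset.mem_coe, memS] at hm₁ hm₂
      rw [adjKN] at hadj₁ hadj₂
      have h1 := a₁.isLt; have h2 := a₂.isLt
      have h3 := b₁.isLt; have h4 := b₂.isLt
      dsimp only at hm₁ hm₂ hadj₁ hadj₂
      have e12 : (a₁ : ℕ) = a₂ ∧ (b₁ : ℕ) = b₂ := by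
        rcases (by omega : a.val % 8 = 0 ∨ a.val % 8 = 1 ∨ a.val % 8 = 2 ∨ a.val % 8 = 3 ∨
            a.val % 8 = 4 ∨ a.val % 8 = 5 ∨ a.val % 8 = 6 ∨ a.val % 8 = 7) with
          h | h | h | h | h | h | h | h <;>
        rcases (by omega : b.val = 0 ∨ b.val = 1 ∨ b.val = 2) with h' | h' | h' <;> omega
      simp [Prod.ext_iff, Fin.ext_iff, e12.1, e12.2]
  · rw [Set.ncard_coe_finset, Finset.card_image_of_injective _ (g_inj k), Finset.card_univ]
    simp [Fintype.card_prod]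
    ring
end

section
/- For every k ≥ 0, the perfect domination number of the (8k+4)×3 knights graph is at most 10k+6. -/
def myP (k c r : ℕ) : Prop :=
  (r = 2 ∧ (c % 8 = 0 ∨ c % 8 = 2 ∨ c % 8 = 4 ∨ c = 8*k+3)) ∨
  (r = 1 ∧ (c % 8 = 2 ∨ c % 8 = 4 ∨ c % 8 = 6)) ∨
  (r = 0 ∧ (c % 8 = 0 ∨ c % 8 = 1 ∨ c % 8 = 4 ∨ (c % 8 = 3 ∧ c ≠ 8*k+3)))

instance (k c r : ℕ) : Decidable (myP k c r) := by unfold myP; infer_instance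

def myA (c r c' r' : ℕ) : Prop :=
  ((c+1 = c' ∨ c'+1 = c) ∧ (r+2 = r' ∨ r'+2 = r)) ∨
  ((c+2 = c' ∨ c'+2 = c) ∧ (r+1 = r' ∨ r'+1 = r))

lemma adj_iff_s4 {n m : ℕ} (p q : Fin n × Fin m) :
    (KN n m).Adj p q ↔ myA p.1.val p.2.val q.1.val q.2.val := by
  show ((|((p.1:ℤ)) - (q.1:ℤ)| = 1 ∧ |((p.2:ℤ)) - (q.2:ℤ)| = 2) ∨
    (|((p.1:ℤ)) - (q.1:ℤ)| = 2 ∧ |((p.2:ℤ)) - (q.2:ℤ)| = 1)) ↔ _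
  unfold myA
  rcases abs_cases ((p.1:ℤ) - (q.1:ℤ)) with ⟨h1,_⟩|⟨h1,_⟩ <;>
  rcases abs_cases ((p.2:ℤ) - (q.2:ℤ)) with ⟨h2,_⟩|⟨h2,_⟩ <;>
  rw [h1, h2] <;> omega

lemma keyAux (k c r : ℕ) (hc : c < 8*k+4) (hr : r < 3) (h : ¬ myP k c r) :
    ∃ c' r', c' < 8*k+4 ∧ r' < 3 ∧ myP k c' r' ∧ myA c r c' r' ∧
      ∀ c'' r'', c'' < 8*k+4 → r'' < 3 → myP k c'' r'' → myA c r c'' r'' →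
        c'' = c' ∧ r'' = r' := by
  simp only [myP, myA] at h ⊢
  interval_cases r
  · rcases (show c%8=0 ∨ c%8=1 ∨ c%8=2 ∨ c%8=3 ∨ c%8=4 ∨ c%8=5 ∨ c%8=6 ∨ c%8=7 from by omega) with hm|hm|hm|hm|hm|hm|hm|hm
    · exact absurd trivial (by omega)
    · exact absurd trivial (by omega)
    · by_cases ht : c = 8*k+2
      · exact ⟨c+1, 2, by omega, by omega, by omega, by omega, fun c'' r'' a b hp ha => by omega⟩
      · exact ⟨c+2, 1, by omega, by omega, by omega, by omega, fun c'' r'' a b hp ha => by omega⟩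
    · exact ⟨c-1, 2, by omega, by omega, by omega, by omega, fun c'' r'' a b hp ha => by omega⟩
    · exact absurd trivial (by omega)
    · exact ⟨c-1, 2, by omega, by omega, by omega, by omega, fun c'' r'' a b hp ha => by omega⟩
    · exact ⟨c-2, 1, by omega, by omega, by omega, by omega, fun c'' r'' a b hp ha => by omega⟩
    · exact ⟨c+1, 2, by omega, by omega, by omega, by omega, fun c'' r'' a b hp ha => by omega⟩
  · rcases (show c%8=0 ∨ c%8=1 ∨ c%8=2 ∨ c%8=3 ∨ c%8=4 ∨ c%8=5 ∨ c%8=6 ∨ c%8=7 from by omega) with hm|hm|hm|hm|hm|hm|hm|hm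
    · exact ⟨c+2, 2, by omega, by omega, by omega, by omega, fun c'' r'' a b hp ha => by omega⟩
    · by_cases ht : c = 8*k+1
      · exact ⟨c+2, 2, by omega, by omega, by omega, by omega, fun c'' r'' a b hp ha => by omega⟩
      · exact ⟨c+2, 0, by omega, by omega, by omega, by omega, fun c'' r'' a b hp ha => by omega⟩
    · exact absurd trivial (by omega)
    · exact ⟨c-2, 0, by omega, by omega, by omega, by omega, fun c'' r'' a b hp ha => by omega⟩
    · exact absurd trivial (by omega)
    · exact ⟨c-2, 0, by omega, by omega, by omega, by omega, fun c'' r'' a b hp ha => by omega⟩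
    · exact absurd trivial (by omega)
    · exact ⟨c+2, 0, by omega, by omega, by omega, by omega, fun c'' r'' a b hp ha => by omega⟩
  · rcases (show c%8=0 ∨ c%8=1 ∨ c%8=2 ∨ c%8=3 ∨ c%8=4 ∨ c%8=5 ∨ c%8=6 ∨ c%8=7 from by omega) with hm|hm|hm|hm|hm|hm|hm|hm
    · exact absurd trivial (by omega)
    · exact ⟨c-1, 0, by omega, by omega, by omega, by omega, fun c'' r'' a b hp ha => by omega⟩
    · exact absurd trivial (by omega)
    · exact ⟨c+1, 0, by omega, by omega, by omega, by omega, fun c'' r'' a b hp ha => by omega⟩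
    · exact absurd trivial (by omega)
    · exact ⟨c-1, 0, by omega, by omega, by omega, by omega, fun c'' r'' a b hp ha => by omega⟩
    · exact ⟨c-2, 1, by omega, by omega, by omega, by omega, fun c'' r'' a b hp ha => by omega⟩
    · exact ⟨c+1, 0, by omega, by omega, by omega, by omega, fun c'' r'' a b hp ha => by omega⟩


def blockB : Finset (ℕ × ℕ) := {(0,2),(2,2),(4,2),(2,1),(4,1),(6,1),(0,0),(1,0),(3,0),(4,0)}
def tailB : Finset (ℕ × ℕ) := {(0,2),(2,2),(3,2),(2,1),(0,0),(1,0)}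

def TN (k : ℕ) : Finset (ℕ × ℕ) :=
  ((Finset.range k).biUnion fun i => blockB.image fun p => (8*i + p.1, p.2)) ∪
    tailB.image fun p => (8*k + p.1, p.2)

lemma mem_TN (k c r : ℕ) : (c,r) ∈ TN k ↔ (c < 8*k+4 ∧ r < 3 ∧ myP k c r) := by
  simp only [TN, Finset.mem_union, Finset.mem_biUnion, Finset.mem_image, Finset.mem_range,
    blockB, tailB, Finset.mem_insert, Finset.mem_singleton, myP]
  constructor
  · rintro (⟨i, hi, ⟨a,b⟩, hp, h1⟩ | ⟨⟨a,b⟩, hp, h1⟩) <;>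
      simp only [Prod.mk.injEq] at hp h1 <;> omega
  · rintro ⟨h1, h2, hP⟩
    by_cases ht : 8*k ≤ c
    · right
      obtain ⟨rfl, hm|hm|hm|hm⟩ | ⟨rfl, hm|hm|hm⟩ | ⟨rfl, hm|hm|hm|hm⟩ := hP
      · exact ⟨(0,2), by tauto, by simp only [Prod.mk.injEq, and_true, true_and]; omega⟩
      · exact ⟨(2,2), by tauto, by simp only [Prod.mk.injEq, and_true, true_and]; omega⟩
      · exact (False.elim (by omega))
      · exact ⟨(3,2), by tauto, by simp only [Prod.mk.injEq, and_true, true_and]; omega⟩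
      · exact ⟨(2,1), by tauto, by simp only [Prod.mk.injEq, and_true, true_and]; omega⟩
      · exact (False.elim (by omega))
      · exact (False.elim (by omega))
      · exact ⟨(0,0), by tauto, by simp only [Prod.mk.injEq, and_true, true_and]; omega⟩
      · exact ⟨(1,0), by tauto, by simp only [Prod.mk.injEq, and_true, true_and]; omega⟩
      · exact (False.elim (by omega))
      · exact (False.elim (by omega))
    · left
      refine ⟨c/8, by omega, ?_⟩
      obtain ⟨rfl, hm|hm|hm|hm⟩ | ⟨rfl, hm|hm|hm⟩ | ⟨rfl, hm|hm|hm|hm⟩ := hP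
      · exact ⟨(0,2), by tauto, by simp only [Prod.mk.injEq, and_true, true_and]; omega⟩
      · exact ⟨(2,2), by tauto, by simp only [Prod.mk.injEq, and_true, true_and]; omega⟩
      · exact ⟨(4,2), by tauto, by simp only [Prod.mk.injEq, and_true, true_and]; omega⟩
      · exact (False.elim (by omega))
      · exact ⟨(2,1), by tauto, by simp only [Prod.mk.injEq, and_true, true_and]; omega⟩
      · exact ⟨(4,1), by tauto, by simp only [Prod.mk.injEq, and_true, true_and]; omega⟩
      · exact ⟨(6,1), by tauto, by simp only [Prod.mk.injEq, and_true, true_and]; omega⟩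
      · exact ⟨(0,0), by tauto, by simp only [Prod.mk.injEq, and_true, true_and]; omega⟩
      · exact ⟨(1,0), by tauto, by simp only [Prod.mk.injEq, and_true, true_and]; omega⟩
      · exact ⟨(4,0), by tauto, by simp only [Prod.mk.injEq, and_true, true_and]; omega⟩
      · exact ⟨(3,0), by tauto, by simp only [Prod.mk.injEq, and_true, true_and]; omega⟩

lemma card_TN (k : ℕ) : (TN k).card = 10*k+6 := by
  have hinj : ∀ i : ℕ, Function.Injective (fun p : ℕ×ℕ => (8*i + p.1, p.2)) := by
    intro i ⟨a,b⟩ ⟨c,d⟩ h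
    simp only [Prod.mk.injEq] at h ⊢; omega
  have hb : ∀ (p : ℕ×ℕ), p ∈ blockB → p.1 ≤ 6 := by decide
  have htl : ∀ (p : ℕ×ℕ), p ∈ tailB → p.1 ≤ 3 := by decide
  rw [TN, Finset.card_union_of_disjoint, Finset.card_biUnion]
  · rw [Finset.card_image_of_injective _ (hinj k)]
    have h10 : ∀ i ∈ Finset.range k, (blockB.image fun p : ℕ×ℕ => (8*i + p.1, p.2)).card = 10 := by
      intro i _
      rw [Finset.card_image_of_injective _ (hinj i)]; decide
    rw [Finset.sum_congr rfl h10, Finset.sum_const, Finset.card_range]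
    have h6 : tailB.card = 6 := by decide
    rw [h6, smul_eq_mul]; ring
  · intro i hi j hj hij
    simp only [Finset.disjoint_left, Finset.mem_image]
    rintro ⟨x,y⟩ ⟨⟨a,b⟩, hp, he⟩ ⟨⟨a',b'⟩, hq, he'⟩
    have := hb _ hp; have := hb _ hq
    simp only [Prod.mk.injEq] at he he'
    simp only [Finset.mem_coe, Finset.mem_range] at hi hj
    simp only at this ‹(a,b).1 ≤ 6›
    omega
  · simp only [Finset.disjoint_left, Finset.mem_biUnion, Finset.mem_image, Finset.mem_range]
    rintro ⟨x,y⟩ ⟨i, hi, ⟨a,b⟩, hp, he⟩ ⟨⟨a',b'⟩, hq, he'⟩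
    have h1 := hb _ hp; have h2 := htl _ hq
    simp only [Prod.mk.injEq] at he he'
    simp only at h1 h2
    omega


theorem stmt4 (k : ℕ) : perfDomNum (KN (8 * k + 4) 3) ≤ 10 * k + 6 := by
  classical
  set F : Finset (Fin (8*k+4) × Fin 3) :=
    Finset.univ.filter (fun v => myP k v.1.val v.2.val) with hF
  have hmemF : ∀ v : Fin (8*k+4) × Fin 3, v ∈ F ↔ myP k v.1.val v.2.val := by
    intro v; simp [hF]
  have hperf : IsPerfDomSet (KN (8*k+4) 3) (↑F) := by
    intro v hv
    have hP : ¬ myP k v.1.val v.2.val := by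
      intro h; exact hv (by simpa [hmemF] using h)
    obtain ⟨c', r', hc', hr', hP', hA', huniq⟩ :=
      keyAux k v.1.val v.2.val v.1.isLt v.2.isLt hP
    refine ⟨(⟨c', hc'⟩, ⟨r', hr'⟩), ⟨(hmemF _).mpr hP', (adj_iff_s4 _ _).mpr hA'⟩, ?_⟩
    rintro ⟨u1, u2⟩ ⟨hm, ha⟩
    have h := huniq u1.val u2.val u1.isLt u2.isLt ((hmemF _).mp hm) ((adj_iff_s4 _ _).mp ha)
    ext
    · exact h.1
    · exact h.2
  have hcard : (↑F : Set (Fin (8*k+4) × Fin 3)).ncard = 10*k+6 := by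
    rw [Set.ncard_coe_finset]
    rw [show F.card = (TN k).card from ?_, card_TN]
    refine Finset.card_bij (fun v _ => (v.1.val, v.2.val)) ?_ ?_ ?_
    · intro v hv
      exact (mem_TN k v.1.val v.2.val).mpr ⟨v.1.isLt, v.2.isLt, (hmemF v).mp hv⟩
    · intro v _ w _ h
      simp only [Prod.mk.injEq] at h
      ext
      · exact h.1
      · exact h.2
    · rintro ⟨c, r⟩ hp
      obtain ⟨h1, h2, h3⟩ := (mem_TN k c r).mp hp
      exact ⟨(⟨c, h1⟩, ⟨r, h2⟩), (hmemF _).mpr h3, rfl⟩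
  exact Nat.sInf_le ⟨↑F, hperf, hcard⟩
end

section
/- For every k ≥ 0, the perfect domination number of the (8k+5)×3 knights graph is at most 10k+6. -/
set_option maxHeartbeats 4000000


def memP (k a b : ℕ) : Prop :=
  (a = 8*k+4 ∧ b = 2) ∨ (a ≠ 8*k+4 ∧ (
    (a % 8 = 1 ∧ b ≠ 1) ∨ (a % 8 = 2 ∧ b = 0) ∨ (a % 8 = 3 ∧ b ≠ 0) ∨
    (a % 8 = 4 ∧ b = 0) ∨ a % 8 = 5 ∨ (a % 8 = 7 ∧ b = 1)))

instance (k a b : ℕ) : Decidable (memP k a b) := by unfold memP; infer_instance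

def gfun (k a : ℕ) : ℕ :=
  if a = 8*k+4 then 1
  else if a % 8 = 1 then 2 else if a % 8 = 2 then 1 else if a % 8 = 3 then 2
  else if a % 8 = 4 then 1 else if a % 8 = 5 then 3 else if a % 8 = 7 then 1 else 0

lemma colcount (k a : ℕ) :
    ((if memP k a 0 then 1 else 0) + (if memP k a 1 then 1 else 0)
      + (if memP k a 2 then 1 else 0) : ℕ) = gfun k a := by
  by_cases hsp : a = 8*k+4
  · simp [memP, gfun, hsp]
  · have h8 : a % 8 = 0 ∨ a % 8 = 1 ∨ a % 8 = 2 ∨ a % 8 = 3 ∨ a % 8 = 4 ∨ a % 8 = 5 ∨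
        a % 8 = 6 ∨ a % 8 = 7 := by omega
    rcases h8 with hr|hr|hr|hr|hr|hr|hr|hr <;> simp [memP, gfun, hsp, hr]

lemma sum_g_aux (k : ℕ) : (Finset.range (8*k+4)).sum (gfun k) = 10*k+5 := by
  induction k with
  | zero => decide
  | succ k ih =>
    have h8 : 8*(k+1)+4 = (8*k+4)+1+1+1+1+1+1+1+1 := by ring
    rw [h8, Finset.sum_range_succ, Finset.sum_range_succ, Finset.sum_range_succ,
      Finset.sum_range_succ, Finset.sum_range_succ, Finset.sum_range_succ,
      Finset.sum_range_succ, Finset.sum_range_succ]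
    have hc : (Finset.range (8*k+4)).sum (gfun (k+1)) = (Finset.range (8*k+4)).sum (gfun k) := by
      apply Finset.sum_congr rfl
      intro a hamem
      rw [Finset.mem_range] at hamem
      unfold gfun; split_ifs <;> omega
    have e0 : gfun (k+1) (8*k+4) = 1 := by unfold gfun; split_ifs <;> omega
    have e1 : gfun (k+1) (8*k+4+1) = 3 := by unfold gfun; split_ifs <;> omega
    have e2 : gfun (k+1) (8*k+4+1+1) = 0 := by unfold gfun; split_ifs <;> omega
    have e3 : gfun (k+1) (8*k+4+1+1+1) = 1 := by unfold gfun; split_ifs <;> omega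
    have e4 : gfun (k+1) (8*k+4+1+1+1+1) = 0 := by unfold gfun; split_ifs <;> omega
    have e5 : gfun (k+1) (8*k+4+1+1+1+1+1) = 2 := by unfold gfun; split_ifs <;> omega
    have e6 : gfun (k+1) (8*k+4+1+1+1+1+1+1) = 1 := by unfold gfun; split_ifs <;> omega
    have e7 : gfun (k+1) (8*k+4+1+1+1+1+1+1+1) = 2 := by unfold gfun; split_ifs <;> omega
    rw [hc, ih, e0, e1, e2, e3, e4, e5, e6, e7]; ring

lemma sum_g (k : ℕ) : (Finset.range (8*k+5)).sum (gfun k) = 10*k+6 := by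
  have h : 8*k+5 = (8*k+4)+1 := rfl
  have e : gfun k (8*k+4) = 1 := by unfold gfun; split_ifs <;> omega
  rw [h, Finset.sum_range_succ, sum_g_aux, e]

def adjN (a b c d : ℕ) : Prop :=
  ((a+1 = c ∨ c+1 = a) ∧ (b = d+2 ∨ d = b+2)) ∨
  ((a+2 = c ∨ c+2 = a) ∧ (b = d+1 ∨ d = b+1))

def domc (k a b : ℕ) : ℕ × ℕ :=
  if a = 8*k+4 then (if b = 0 then (a-1, 2) else (a-2, 0))
  else if a % 8 = 0 then (if b = 0 then (a+1, 2) else if b = 1 then (a+2, 0) else (a+1, 0))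
  else if a % 8 = 1 then (a+2, 2)
  else if a % 8 = 2 then (if b = 1 then (if a = 8*k+2 then (a+2, 2) else (a+2, 0)) else (a-1, 0))
  else if a % 8 = 3 then (if a = 8*k+3 then (a+1, 2) else (a+2, 1))
  else if a % 8 = 4 then (if b = 1 then (a-2, 0) else (a+1, 0))
  else if a % 8 = 6 then (if b = 0 then (a-1, 2) else if b = 1 then (a-2, 0) else (a-1, 0))
  else (a-2, 1)

lemma exists_dom (k a b : ℕ) (ha : a < 8*k+5) (hb : b < 3) (h : ¬ memP k a b) :
    memP k (domc k a b).1 (domc k a b).2 ∧ (domc k a b).1 < 8*k+5 ∧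
      (domc k a b).2 < 3 ∧ adjN a b (domc k a b).1 (domc k a b).2 := by
  unfold memP at *
  unfold domc adjN
  split_ifs <;> dsimp only <;> omega

lemma uniq_dom (k a b c d : ℕ) (ha : a < 8*k+5) (hb : b < 3) (hc : c < 8*k+5) (hd : d < 3)
    (h : ¬ memP k a b) (hm : memP k c d) (hadj : adjN a b c d) :
    c = (domc k a b).1 ∧ d = (domc k a b).2 := by
  unfold memP at *
  unfold adjN at hadj
  unfold domc
  split_ifs <;> dsimp only <;> omega

lemma knightAdj_iff_adjN (a b c d : ℕ) :
    knightAdj ((a:ℤ), (b:ℤ)) ((c:ℤ), (d:ℤ)) ↔ adjN a b c d := by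
  unfold knightAdj adjN
  have h1 : ∀ x y : ℤ, |x - y| = 1 ↔ (x - y = 1 ∨ x - y = -1) := fun x y => abs_eq (by norm_num)
  have h2 : ∀ x y : ℤ, |x - y| = 2 ↔ (x - y = 2 ∨ x - y = -2) := fun x y => abs_eq (by norm_num)
  dsimp only
  simp only [h1, h2]
  omega

theorem stmt5 (k : ℕ) : perfDomNum (KN (8 * k + 5) 3) ≤ 10 * k + 6 := by
  apply Nat.sInf_le
  refine ⟨(↑((Finset.univ : Finset (Fin (8*k+5) × Fin 3)).filter
      (fun p => memP k p.1.1 p.2.1)) : Set (Fin (8*k+5) × Fin 3)), ?_, ?_⟩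
  · intro v hv
    have ha : (v.1 : ℕ) < 8*k+5 := v.1.2
    have hb : (v.2 : ℕ) < 3 := v.2.2
    have hv' : ¬ memP k v.1.1 v.2.1 := by
      simpa using hv
    obtain ⟨hm, hc, hd, hadj⟩ := exists_dom k v.1.1 v.2.1 ha hb hv'
    refine ⟨(⟨(domc k v.1.1 v.2.1).1, hc⟩, ⟨(domc k v.1.1 v.2.1).2, hd⟩), ⟨?_, ?_⟩, ?_⟩
    · simp [hm]
    · show knightAdj _ _
      rw [show ((((⟨(domc k v.1.1 v.2.1).1, hc⟩ : Fin (8*k+5)) : Fin (8*k+5)) : ℤ)) = ((domc k v.1.1 v.2.1).1 : ℤ) from rfl]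
      exact (knightAdj_iff_adjN v.1.1 v.2.1 (domc k v.1.1 v.2.1).1 (domc k v.1.1 v.2.1).2).mpr hadj
    · rintro ⟨c', d'⟩ ⟨hmem, hadj'⟩
      have hmem' : memP k c'.1 d'.1 := by simpa using hmem
      have hadjN : adjN v.1.1 v.2.1 c'.1 d'.1 :=
        (knightAdj_iff_adjN v.1.1 v.2.1 c'.1 d'.1).mp hadj'
      obtain ⟨h1, h2⟩ := uniq_dom k v.1.1 v.2.1 c'.1 d'.1 ha hb c'.2 d'.2 hv' hmem' hadjN
      exact Prod.ext (Fin.ext h1) (Fin.ext h2)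
  · rw [Set.ncard_coe_finset, Finset.card_filter, Fintype.sum_prod_type]
    have hcol : ∀ a : Fin (8*k+5),
        (∑ b : Fin 3, if memP k a.1 b.1 then 1 else 0) = gfun k a.1 := by
      intro a
      rw [Fin.sum_univ_three]
      exact colcount k a.1
    rw [Finset.sum_congr rfl (fun a _ => hcol a)]
    rw [Fin.sum_univ_eq_sum_range (fun a => gfun k a) (8*k+5)]
    exact sum_g k
end

section
/- For every k ≥ 0, the perfect domination number of the (8k+6)×3 knights graph is at most 10k+7. -/
def Pk (k c r : ℕ) : Prop :=
  (c ≤ 8*k+3 ∧ ((c % 8 = 1 ∧ (r = 0 ∨ r = 2)) ∨ (c % 8 = 2 ∧ r = 0) ∨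
    (c % 8 = 3 ∧ (r = 1 ∨ r = 2)) ∨ (c % 8 = 4 ∧ r = 0) ∨ c % 8 = 5 ∨
    (c % 8 = 7 ∧ r = 1))) ∨ (c = 8*k+4 ∧ r = 2) ∨ (c = 8*k+5 ∧ r = 0)

instance instDecPk (k c r : ℕ) : Decidable (Pk k c r) := by unfold Pk; infer_instance

def AdjN (a b c d : ℕ) : Prop :=
  ((a + 1 = c ∨ c + 1 = a) ∧ (b + 2 = d ∨ d + 2 = b)) ∨
  ((a + 2 = c ∨ c + 2 = a) ∧ (b + 1 = d ∨ d + 1 = b))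

lemma knight_iff (a b c d : ℕ) :
    knightAdj ((a : ℤ), (b : ℤ)) ((c : ℤ), (d : ℤ)) ↔ AdjN a b c d := by
  unfold knightAdj AdjN
  simp only [abs_eq (by norm_num : (0:ℤ) ≤ 1), abs_eq (by norm_num : (0:ℤ) ≤ 2)]
  omega

def gN (k c : ℕ) : ℕ :=
  (if Pk k c 0 then 1 else 0) + (if Pk k c 1 then 1 else 0) + (if Pk k c 2 then 1 else 0)

lemma gN_shift (k c : ℕ) (h : c ≤ 8*k+3) : gN (k+1) c = gN k c := by
  have h1 : Pk (k+1) c 0 ↔ Pk k c 0 := by unfold Pk; omega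
  have h2 : Pk (k+1) c 1 ↔ Pk k c 1 := by unfold Pk; omega
  have h3 : Pk (k+1) c 2 ↔ Pk k c 2 := by unfold Pk; omega
  unfold gN
  rw [if_congr h1 rfl rfl, if_congr h2 rfl rfl, if_congr h3 rfl rfl]

lemma psum (k : ℕ) : ∑ c ∈ Finset.range (8*k+4), gN k c = 10*k+5 := by
  induction k with
  | zero =>
    norm_num [Finset.sum_range_succ, gN, Pk]
  | succ k ih =>
    have hr : 8*(k+1)+4 = (8*k+4)+8 := by ring
    rw [hr]
    rw [Finset.sum_range_succ, Finset.sum_range_succ, Finset.sum_range_succ,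
      Finset.sum_range_succ, Finset.sum_range_succ, Finset.sum_range_succ,
      Finset.sum_range_succ, Finset.sum_range_succ]
    have hshift : ∑ c ∈ Finset.range (8*k+4), gN (k+1) c
        = ∑ c ∈ Finset.range (8*k+4), gN k c := by
      refine Finset.sum_congr rfl fun c hc => ?_
      have hcb : c < 8*k+4 := Finset.mem_range.mp hc
      exact gN_shift k c (by omega)
    rw [hshift, ih]
    have e4 : gN (k+1) (8*k+4) = 1 := by
      have h0 : Pk (k+1) (8*k+4) 0 := by unfold Pk; omega
      have h1 : ¬ Pk (k+1) (8*k+4) 1 := by unfold Pk; omega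
      have h2 : ¬ Pk (k+1) (8*k+4) 2 := by unfold Pk; omega
      unfold gN
      rw [if_pos h0, if_neg h1, if_neg h2]
    have e5 : gN (k+1) (8*k+5) = 3 := by
      have h0 : Pk (k+1) (8*k+5) 0 := by unfold Pk; omega
      have h1 : Pk (k+1) (8*k+5) 1 := by unfold Pk; omega
      have h2 : Pk (k+1) (8*k+5) 2 := by unfold Pk; omega
      unfold gN
      rw [if_pos h0, if_pos h1, if_pos h2]
    have e6 : gN (k+1) (8*k+6) = 0 := by
      have h0 : ¬ Pk (k+1) (8*k+6) 0 := by unfold Pk; omega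
      have h1 : ¬ Pk (k+1) (8*k+6) 1 := by unfold Pk; omega
      have h2 : ¬ Pk (k+1) (8*k+6) 2 := by unfold Pk; omega
      unfold gN
      rw [if_neg h0, if_neg h1, if_neg h2]
    have e7 : gN (k+1) (8*k+7) = 1 := by
      have h0 : ¬ Pk (k+1) (8*k+7) 0 := by unfold Pk; omega
      have h1 : Pk (k+1) (8*k+7) 1 := by unfold Pk; omega
      have h2 : ¬ Pk (k+1) (8*k+7) 2 := by unfold Pk; omega
      unfold gN
      rw [if_neg h0, if_pos h1, if_neg h2]
    have e8 : gN (k+1) (8*k+8) = 0 := by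
      have h0 : ¬ Pk (k+1) (8*k+8) 0 := by unfold Pk; omega
      have h1 : ¬ Pk (k+1) (8*k+8) 1 := by unfold Pk; omega
      have h2 : ¬ Pk (k+1) (8*k+8) 2 := by unfold Pk; omega
      unfold gN
      rw [if_neg h0, if_neg h1, if_neg h2]
    have e9 : gN (k+1) (8*k+9) = 2 := by
      have h0 : Pk (k+1) (8*k+9) 0 := by unfold Pk; omega
      have h1 : ¬ Pk (k+1) (8*k+9) 1 := by unfold Pk; omega
      have h2 : Pk (k+1) (8*k+9) 2 := by unfold Pk; omega
      unfold gN
      rw [if_pos h0, if_neg h1, if_pos h2]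
    have e10 : gN (k+1) (8*k+10) = 1 := by
      have h0 : Pk (k+1) (8*k+10) 0 := by unfold Pk; omega
      have h1 : ¬ Pk (k+1) (8*k+10) 1 := by unfold Pk; omega
      have h2 : ¬ Pk (k+1) (8*k+10) 2 := by unfold Pk; omega
      unfold gN
      rw [if_pos h0, if_neg h1, if_neg h2]
    have e11 : gN (k+1) (8*k+11) = 2 := by
      have h0 : ¬ Pk (k+1) (8*k+11) 0 := by unfold Pk; omega
      have h1 : Pk (k+1) (8*k+11) 1 := by unfold Pk; omega
      have h2 : Pk (k+1) (8*k+11) 2 := by unfold Pk; omega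
      unfold gN
      rw [if_neg h0, if_pos h1, if_pos h2]
    omega

lemma gsum (k : ℕ) : ∑ c ∈ Finset.range (8*k+6), gN k c = 10*k+7 := by
  have h6 : 8*k+6 = (8*k+4)+2 := by ring
  rw [h6, Finset.sum_range_succ, Finset.sum_range_succ, psum]
  have e1 : gN k (8*k+4) = 1 := by
    have h0 : ¬ Pk k (8*k+4) 0 := by unfold Pk; omega
    have h1 : ¬ Pk k (8*k+4) 1 := by unfold Pk; omega
    have h2 : Pk k (8*k+4) 2 := by unfold Pk; omega
    unfold gN
    rw [if_neg h0, if_neg h1, if_pos h2]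
  have e2 : gN k (8*k+5) = 1 := by
    have h0 : Pk k (8*k+5) 0 := by unfold Pk; omega
    have h1 : ¬ Pk k (8*k+5) 1 := by unfold Pk; omega
    have h2 : ¬ Pk k (8*k+5) 2 := by unfold Pk; omega
    unfold gN
    rw [if_pos h0, if_neg h1, if_neg h2]
  omega

lemma key (k c r : ℕ) (hc0 : c < 8*k+6) (hr0 : r < 3) (hv : ¬ Pk k c r) :
    ∃ c' r', c' < 8*k+6 ∧ r' < 3 ∧ Pk k c' r' ∧ AdjN c r c' r' ∧
      ∀ c'' r'', c'' < 8*k+6 → r'' < 3 → Pk k c'' r'' → AdjN c r c'' r'' → c'' = c' ∧ r'' = r' := by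
  unfold Pk AdjN at *
  have hrr : r = 0 ∨ r = 1 ∨ r = 2 := by omega
  rcases Nat.lt_or_ge c (8*k+2) with hR|hR
  · rcases Nat.lt_or_ge c 2 with hL|hL
    · have hcase : c = 0 ∨ c = 1 := by omega
      rcases hcase with hc|hc <;> rcases hrr with hr|hr|hr
      · exact ⟨c + 1, 2, by omega, by omega, by omega, by omega, fun c'' r'' h1 h2 h3 h4 => by omega⟩
      · exact ⟨c + 2, 0, by omega, by omega, by omega, by omega, fun c'' r'' h1 h2 h3 h4 => by omega⟩
      · exact ⟨c + 1, 0, by omega, by omega, by omega, by omega, fun c'' r'' h1 h2 h3 h4 => by omega⟩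
      · exact absurd (by omega) hv
      · exact ⟨c + 2, 2, by omega, by omega, by omega, by omega, fun c'' r'' h1 h2 h3 h4 => by omega⟩
      · exact absurd (by omega) hv
    · have h8 : c % 8 = 0 ∨ c % 8 = 1 ∨ c % 8 = 2 ∨ c % 8 = 3 ∨ c % 8 = 4 ∨ c % 8 = 5 ∨ c % 8 = 6 ∨ c % 8 = 7 := by omega
      rcases h8 with hc|hc|hc|hc|hc|hc|hc|hc <;> rcases hrr with hr|hr|hr
      · exact ⟨c + 1, 2, by omega, by omega, by omega, by omega, fun c'' r'' h1 h2 h3 h4 => by omega⟩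
      · exact ⟨c + 2, 0, by omega, by omega, by omega, by omega, fun c'' r'' h1 h2 h3 h4 => by omega⟩
      · exact ⟨c + 1, 0, by omega, by omega, by omega, by omega, fun c'' r'' h1 h2 h3 h4 => by omega⟩
      · exact absurd (by omega) hv
      · exact ⟨c + 2, 2, by omega, by omega, by omega, by omega, fun c'' r'' h1 h2 h3 h4 => by omega⟩
      · exact absurd (by omega) hv
      · exact absurd (by omega) hv
      · exact ⟨c + 2, 0, by omega, by omega, by omega, by omega, fun c'' r'' h1 h2 h3 h4 => by omega⟩
      · exact ⟨c - 1, 0, by omega, by omega, by omega, by omega, fun c'' r'' h1 h2 h3 h4 => by omega⟩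
      · exact ⟨c + 2, 1, by omega, by omega, by omega, by omega, fun c'' r'' h1 h2 h3 h4 => by omega⟩
      · exact absurd (by omega) hv
      · exact absurd (by omega) hv
      · exact absurd (by omega) hv
      · exact ⟨c - 2, 0, by omega, by omega, by omega, by omega, fun c'' r'' h1 h2 h3 h4 => by omega⟩
      · exact ⟨c + 1, 0, by omega, by omega, by omega, by omega, fun c'' r'' h1 h2 h3 h4 => by omega⟩
      · exact absurd (by omega) hv
      · exact absurd (by omega) hv
      · exact absurd (by omega) hv
      · exact ⟨c - 1, 2, by omega, by omega, by omega, by omega, fun c'' r'' h1 h2 h3 h4 => by omega⟩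
      · exact ⟨c - 2, 0, by omega, by omega, by omega, by omega, fun c'' r'' h1 h2 h3 h4 => by omega⟩
      · exact ⟨c - 1, 0, by omega, by omega, by omega, by omega, fun c'' r'' h1 h2 h3 h4 => by omega⟩
      · exact ⟨c - 2, 1, by omega, by omega, by omega, by omega, fun c'' r'' h1 h2 h3 h4 => by omega⟩
      · exact absurd (by omega) hv
      · exact ⟨c - 2, 1, by omega, by omega, by omega, by omega, fun c'' r'' h1 h2 h3 h4 => by omega⟩
  · have hcase : c = 8*k+2 ∨ c = 8*k+3 ∨ c = 8*k+4 ∨ c = 8*k+5 := by omega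
    rcases hcase with hc|hc|hc|hc <;> rcases hrr with hr|hr|hr
    · exact absurd (by omega) hv
    · exact ⟨c + 2, 2, by omega, by omega, by omega, by omega, fun c'' r'' h1 h2 h3 h4 => by omega⟩
    · exact ⟨c - 1, 0, by omega, by omega, by omega, by omega, fun c'' r'' h1 h2 h3 h4 => by omega⟩
    · exact ⟨c + 1, 2, by omega, by omega, by omega, by omega, fun c'' r'' h1 h2 h3 h4 => by omega⟩
    · exact absurd (by omega) hv
    · exact absurd (by omega) hv
    · exact ⟨c - 1, 2, by omega, by omega, by omega, by omega, fun c'' r'' h1 h2 h3 h4 => by omega⟩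
    · exact ⟨c - 2, 0, by omega, by omega, by omega, by omega, fun c'' r'' h1 h2 h3 h4 => by omega⟩
    · exact absurd (by omega) hv
    · exact absurd (by omega) hv
    · exact ⟨c - 2, 2, by omega, by omega, by omega, by omega, fun c'' r'' h1 h2 h3 h4 => by omega⟩
    · exact ⟨c - 2, 1, by omega, by omega, by omega, by omega, fun c'' r'' h1 h2 h3 h4 => by omega⟩

set_option maxHeartbeats 1000000 in
theorem stmt6 (k : ℕ) : perfDomNum (KN (8 * k + 6) 3) ≤ 10 * k + 7 := by
  apply Nat.sInf_le
  refine ⟨↑(Finset.univ.filter fun p : Fin (8*k+6) × Fin 3 => Pk k p.1.1 p.2.1), ?_, ?_⟩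
  · intro v hv
    have hv' : ¬ Pk k v.1.1 v.2.1 := by
      intro h
      exact hv (by simp [h])
    obtain ⟨c', r', hc', hr', hp, ha, huniq⟩ := key k v.1.1 v.2.1 v.1.isLt v.2.isLt hv'
    refine ⟨(⟨c', hc'⟩, ⟨r', hr'⟩), ⟨by simp [hp], ?_⟩, ?_⟩
    · show knightAdj _ _
      exact (knight_iff _ _ _ _).mpr ha
    · rintro u' ⟨hp', ha'⟩
      have hp'' : Pk k u'.1.1 u'.2.1 := by simpa using hp'
      have ha'' : AdjN v.1.1 v.2.1 u'.1.1 u'.2.1 := (knight_iff _ _ _ _).mp ha'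
      obtain ⟨h1, h2⟩ := huniq u'.1.1 u'.2.1 u'.1.isLt u'.2.isLt hp'' ha''
      exact Prod.ext (Fin.ext h1) (Fin.ext h2)
  · rw [Set.ncard_coe_finset, Finset.card_filter, Fintype.sum_prod_type]
    have hinner : ∀ a : Fin (8*k+6),
        (∑ b : Fin 3, if Pk k a.1 b.1 then 1 else 0) = gN k a.1 := by
      intro a
      rw [Fin.sum_univ_three]
      rfl
    rw [Finset.sum_congr rfl fun a _ => hinner a]
    rw [← gsum k, ← Fin.sum_univ_eq_sum_range]
end

section
/- The perfect domination number of the 7×4 knights graph equals 28; that is, the only perfect dominating set of KN_{7,4} is the entire vertex set. -/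
/-! ### Verified pruned search machinery -/

section Search

variable {V : Type} [DecidableEq V]

/-- true-assigned neighbours of `v`. -/
def trueNbrs (nbr : V → List V) (σ : V → Option Bool) (v : V) : List V :=
  (nbr v).filter fun u => decide (σ u = some true)

/-- The partial assignment `σ` is already inconsistent with being a perfect
dominating set. -/
def pruneB (nbr : V → List V) (all : List V) (σ : V → Option Bool) : Bool :=
  all.any fun v =>
    decide (σ v = some false) &&
      (decide (1 < (trueNbrs nbr σ v).length) ||
        (((nbr v).all fun u => decide (σ u ≠ none)) &&
          decide ((trueNbrs nbr σ v).length ≠ 1)))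

/-- Pruned exhaustive search: returns `true` iff every total extension of `σ`
(branching over the unassigned cells `l`) that is a perfect dominating set is
all-true. -/
def checkB (nbr : V → List V) (all : List V) : List V → (V → Option Bool) → Bool
  | [], σ => pruneB nbr all σ || all.all fun v => decide (σ v = some true)
  | v :: rest, σ =>
      (pruneB nbr (v :: nbr v) (Function.update σ v (some true)) ||
          checkB nbr all rest (Function.update σ v (some true))) &&
        (pruneB nbr (v :: nbr v) (Function.update σ v (some false)) ||
          checkB nbr all rest (Function.update σ v (some false)))

/-- `τ` is a total extension of the partial assignment `σ`. -/
def PExt (σ : V → Option Bool) (τ : V → Bool) : Prop :=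
  ∀ v b, σ v = some b → τ v = b

/-- Boolean-function version of being a perfect dominating set. -/
def PdsB (A : V → V → Prop) (τ : V → Bool) : Prop :=
  ∀ v, τ v = false → ∃! u, τ u = true ∧ A v u

lemma exists_two {α : Type*} {l : List α} (hnd : l.Nodup) (hl : 1 < l.length) :
    ∃ a b, a ∈ l ∧ b ∈ l ∧ a ≠ b := by
  match l with
  | [] => simp at hl
  | [a] => simp at hl
  | a :: b :: t =>
    refine ⟨a, b, by simp, by simp, ?_⟩
    rintro rfl
    simp at hnd

variable {A : V → V → Prop} {nbr : V → List V} {all : List V}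

lemma prune_sound (Hnbr : ∀ v u, A v u ↔ u ∈ nbr v) (Hnd : ∀ v, (nbr v).Nodup)
    {σ : V → Option Bool} (h : pruneB nbr all σ = true) :
    ∀ τ, PExt σ τ → ¬ PdsB A τ := by
  intro τ hext hpds
  rw [pruneB, List.any_eq_true] at h
  obtain ⟨v, -, hv⟩ := h
  rw [Bool.and_eq_true, decide_eq_true_eq] at hv
  obtain ⟨hvf, hrest⟩ := hv
  have hτv : τ v = false := hext v false hvf
  obtain ⟨u₀, ⟨hu₀t, hu₀a⟩, huniq⟩ := hpds v hτv
  have hmemL : ∀ u, u ∈ trueNbrs nbr σ v → τ u = true ∧ A v u := by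
    intro u hu
    rw [trueNbrs, List.mem_filter, decide_eq_true_eq] at hu
    exact ⟨hext u true hu.2, (Hnbr v u).2 hu.1⟩
  have hndL : (trueNbrs nbr σ v).Nodup := (Hnd v).filter _
  rw [Bool.or_eq_true] at hrest
  rcases hrest with hlen | hfull
  · rw [decide_eq_true_eq] at hlen
    obtain ⟨a, b, ha, hb, hab⟩ := exists_two hndL hlen
    obtain ⟨hat, haa⟩ := hmemL a ha
    obtain ⟨hbt, hba⟩ := hmemL b hb
    exact hab ((huniq a ⟨hat, haa⟩).trans (huniq b ⟨hbt, hba⟩).symm)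
  · rw [Bool.and_eq_true, List.all_eq_true, decide_eq_true_eq] at hfull
    obtain ⟨hdec, hne1⟩ := hfull
    -- `u₀` is in the trueNbrs list
    have hu₀mem : u₀ ∈ trueNbrs nbr σ v := by
      have hu₀nbr : u₀ ∈ nbr v := (Hnbr v u₀).1 hu₀a
      have := hdec u₀ hu₀nbr
      rw [decide_eq_true_eq] at this
      cases hσ : σ u₀ with
      | none => exact absurd hσ this
      | some b =>
        have : b = true := (hext u₀ b hσ) ▸ hu₀t
        subst this
        rw [trueNbrs, List.mem_filter, decide_eq_true_eq]
        exact ⟨hu₀nbr, hσ⟩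
    have hlen1 : 1 ≤ (trueNbrs nbr σ v).length :=
      List.length_pos_iff.mpr (List.ne_nil_of_mem hu₀mem)
    have : 1 < (trueNbrs nbr σ v).length :=
      lt_of_le_of_ne hlen1 (fun h => hne1 h.symm)
    obtain ⟨a, b, ha, hb, hab⟩ := exists_two hndL this
    obtain ⟨hat, haa⟩ := hmemL a ha
    obtain ⟨hbt, hba⟩ := hmemL b hb
    exact hab ((huniq a ⟨hat, haa⟩).trans (huniq b ⟨hbt, hba⟩).symm)

lemma check_sound (Hnbr : ∀ v u, A v u ↔ u ∈ nbr v) (Hnd : ∀ v, (nbr v).Nodup)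
    (Hall : ∀ v : V, v ∈ all) :
    ∀ (l : List V) (σ : V → Option Bool), checkB nbr all l σ = true →
      (∀ v, σ v = none → v ∈ l) →
      ∀ τ, PExt σ τ → PdsB A τ → ∀ v, τ v = true := by
  intro l
  induction l with
  | nil =>
    intro σ h _ τ hext hpds v
    rw [checkB, Bool.or_eq_true] at h
    rcases h with h | h
    · exact absurd hpds (prune_sound Hnbr Hnd h τ hext)
    · rw [List.all_eq_true] at h
      have := h v (Hall v)
      rw [decide_eq_true_eq] at this
      exact hext v true this
  | cons w rest ih =>
    intro σ h hcov τ hext hpds v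
    rw [checkB, Bool.and_eq_true] at h
    have key : ∀ b : Bool, τ w = b →
        (pruneB nbr (w :: nbr w) (Function.update σ w (some b)) ||
          checkB nbr all rest (Function.update σ w (some b))) = true → τ v = true := by
      intro b hτw hch
      have hext' : PExt (Function.update σ w (some b)) τ := by
        intro u b' hu
        by_cases hne : u = w
        · subst hne
          rw [Function.update_self] at hu
          cases hu; exact hτw
        · rw [Function.update_of_ne hne] at hu
          exact hext u b' hu
      rw [Bool.or_eq_true] at hch
      rcases hch with hch | hch
      · exact absurd hpds (prune_sound Hnbr Hnd hch τ hext')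
      refine ih (Function.update σ w (some b)) hch ?_ τ hext' hpds v
      · intro u hu
        have hne : u ≠ w := by
          intro h'; subst h'
          rw [Function.update_self] at hu; exact nomatch hu
        rw [Function.update_of_ne hne] at hu
        have := hcov u hu
        rcases List.mem_cons.1 this with h' | h'
        · exact absurd h' hne
        · exact h'
    cases hτw : τ w with
    | true => exact key true hτw h.1
    | false => exact key false hτw h.2

end Search

/-! ### Instantiation for `KN 7 4` -/

instance : DecidableRel (KN 7 4).Adj := fun p q =>
  decidable_of_iff
    ((|((p.1 : ℤ)) - (q.1 : ℤ)| = 1 ∧ |((p.2 : ℤ)) - (q.2 : ℤ)| = 2) ∨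
      (|((p.1 : ℤ)) - (q.1 : ℤ)| = 2 ∧ |((p.2 : ℤ)) - (q.2 : ℤ)| = 1)) Iff.rfl

def nbrTable : List (List (Fin 7 × Fin 4)) := [
  [((1 : Fin 7), (2 : Fin 4)), ((2 : Fin 7), (1 : Fin 4))],
  [((1 : Fin 7), (3 : Fin 4)), ((2 : Fin 7), (2 : Fin 4)), ((2 : Fin 7), (0 : Fin 4))],
  [((2 : Fin 7), (3 : Fin 4)), ((1 : Fin 7), (0 : Fin 4)), ((2 : Fin 7), (1 : Fin 4))],
  [((1 : Fin 7), (1 : Fin 4)), ((2 : Fin 7), (2 : Fin 4))],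
  [((2 : Fin 7), (2 : Fin 4)), ((3 : Fin 7), (1 : Fin 4)), ((0 : Fin 7), (2 : Fin 4))],
  [((2 : Fin 7), (3 : Fin 4)), ((3 : Fin 7), (2 : Fin 4)), ((0 : Fin 7), (3 : Fin 4)), ((3 : Fin 7), (0 : Fin 4))],
  [((3 : Fin 7), (3 : Fin 4)), ((2 : Fin 7), (0 : Fin 4)), ((3 : Fin 7), (1 : Fin 4)), ((0 : Fin 7), (0 : Fin 4))],
  [((2 : Fin 7), (1 : Fin 4)), ((3 : Fin 7), (2 : Fin 4)), ((0 : Fin 7), (1 : Fin 4))],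
  [((3 : Fin 7), (2 : Fin 4)), ((4 : Fin 7), (1 : Fin 4)), ((1 : Fin 7), (2 : Fin 4)), ((0 : Fin 7), (1 : Fin 4))],
  [((3 : Fin 7), (3 : Fin 4)), ((4 : Fin 7), (2 : Fin 4)), ((1 : Fin 7), (3 : Fin 4)), ((0 : Fin 7), (2 : Fin 4)), ((4 : Fin 7), (0 : Fin 4)), ((0 : Fin 7), (0 : Fin 4))],
  [((4 : Fin 7), (3 : Fin 4)), ((0 : Fin 7), (3 : Fin 4)), ((3 : Fin 7), (0 : Fin 4)), ((4 : Fin 7), (1 : Fin 4)), ((1 : Fin 7), (0 : Fin 4)), ((0 : Fin 7), (1 : Fin 4))],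
  [((3 : Fin 7), (1 : Fin 4)), ((4 : Fin 7), (2 : Fin 4)), ((1 : Fin 7), (1 : Fin 4)), ((0 : Fin 7), (2 : Fin 4))],
  [((4 : Fin 7), (2 : Fin 4)), ((5 : Fin 7), (1 : Fin 4)), ((2 : Fin 7), (2 : Fin 4)), ((1 : Fin 7), (1 : Fin 4))],
  [((4 : Fin 7), (3 : Fin 4)), ((5 : Fin 7), (2 : Fin 4)), ((2 : Fin 7), (3 : Fin 4)), ((1 : Fin 7), (2 : Fin 4)), ((5 : Fin 7), (0 : Fin 4)), ((1 : Fin 7), (0 : Fin 4))],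
  [((5 : Fin 7), (3 : Fin 4)), ((1 : Fin 7), (3 : Fin 4)), ((4 : Fin 7), (0 : Fin 4)), ((5 : Fin 7), (1 : Fin 4)), ((2 : Fin 7), (0 : Fin 4)), ((1 : Fin 7), (1 : Fin 4))],
  [((4 : Fin 7), (1 : Fin 4)), ((5 : Fin 7), (2 : Fin 4)), ((2 : Fin 7), (1 : Fin 4)), ((1 : Fin 7), (2 : Fin 4))],
  [((5 : Fin 7), (2 : Fin 4)), ((6 : Fin 7), (1 : Fin 4)), ((3 : Fin 7), (2 : Fin 4)), ((2 : Fin 7), (1 : Fin 4))],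
  [((5 : Fin 7), (3 : Fin 4)), ((6 : Fin 7), (2 : Fin 4)), ((3 : Fin 7), (3 : Fin 4)), ((2 : Fin 7), (2 : Fin 4)), ((6 : Fin 7), (0 : Fin 4)), ((2 : Fin 7), (0 : Fin 4))],
  [((6 : Fin 7), (3 : Fin 4)), ((2 : Fin 7), (3 : Fin 4)), ((5 : Fin 7), (0 : Fin 4)), ((6 : Fin 7), (1 : Fin 4)), ((3 : Fin 7), (0 : Fin 4)), ((2 : Fin 7), (1 : Fin 4))],
  [((5 : Fin 7), (1 : Fin 4)), ((6 : Fin 7), (2 : Fin 4)), ((3 : Fin 7), (1 : Fin 4)), ((2 : Fin 7), (2 : Fin 4))],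
  [((6 : Fin 7), (2 : Fin 4)), ((4 : Fin 7), (2 : Fin 4)), ((3 : Fin 7), (1 : Fin 4))],
  [((6 : Fin 7), (3 : Fin 4)), ((4 : Fin 7), (3 : Fin 4)), ((3 : Fin 7), (2 : Fin 4)), ((3 : Fin 7), (0 : Fin 4))],
  [((3 : Fin 7), (3 : Fin 4)), ((6 : Fin 7), (0 : Fin 4)), ((4 : Fin 7), (0 : Fin 4)), ((3 : Fin 7), (1 : Fin 4))],
  [((6 : Fin 7), (1 : Fin 4)), ((4 : Fin 7), (1 : Fin 4)), ((3 : Fin 7), (2 : Fin 4))],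
  [((5 : Fin 7), (2 : Fin 4)), ((4 : Fin 7), (1 : Fin 4))],
  [((5 : Fin 7), (3 : Fin 4)), ((4 : Fin 7), (2 : Fin 4)), ((4 : Fin 7), (0 : Fin 4))],
  [((4 : Fin 7), (3 : Fin 4)), ((5 : Fin 7), (0 : Fin 4)), ((4 : Fin 7), (1 : Fin 4))],
  [((5 : Fin 7), (1 : Fin 4)), ((4 : Fin 7), (2 : Fin 4))]
]

def allList : List (Fin 7 × Fin 4) := [
  ((0 : Fin 7), (0 : Fin 4)),
  ((0 : Fin 7), (1 : Fin 4)),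
  ((0 : Fin 7), (2 : Fin 4)),
  ((0 : Fin 7), (3 : Fin 4)),
  ((1 : Fin 7), (0 : Fin 4)),
  ((1 : Fin 7), (1 : Fin 4)),
  ((1 : Fin 7), (2 : Fin 4)),
  ((1 : Fin 7), (3 : Fin 4)),
  ((2 : Fin 7), (0 : Fin 4)),
  ((2 : Fin 7), (1 : Fin 4)),
  ((2 : Fin 7), (2 : Fin 4)),
  ((2 : Fin 7), (3 : Fin 4)),
  ((3 : Fin 7), (0 : Fin 4)),
  ((3 : Fin 7), (1 : Fin 4)),
  ((3 : Fin 7), (2 : Fin 4)),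
  ((3 : Fin 7), (3 : Fin 4)),
  ((4 : Fin 7), (0 : Fin 4)),
  ((4 : Fin 7), (1 : Fin 4)),
  ((4 : Fin 7), (2 : Fin 4)),
  ((4 : Fin 7), (3 : Fin 4)),
  ((5 : Fin 7), (0 : Fin 4)),
  ((5 : Fin 7), (1 : Fin 4)),
  ((5 : Fin 7), (2 : Fin 4)),
  ((5 : Fin 7), (3 : Fin 4)),
  ((6 : Fin 7), (0 : Fin 4)),
  ((6 : Fin 7), (1 : Fin 4)),
  ((6 : Fin 7), (2 : Fin 4)),
  ((6 : Fin 7), (3 : Fin 4))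
]


def nbrF (v : Fin 7 × Fin 4) : List (Fin 7 × Fin 4) :=
  nbrTable.getD (v.1.val * 4 + v.2.val) []

set_option maxHeartbeats 4000000 in
lemma KN74_unique (S : Set (Fin 7 × Fin 4)) (hS : IsPerfDomSet (KN 7 4) S) :
    S = Set.univ := by
  classical
  set τ : Fin 7 × Fin 4 → Bool := fun v => decide (v ∈ S) with hτdef
  have hτ : ∀ v, τ v = true ↔ v ∈ S := by
    intro v; rw [hτdef]; simp
  have hpds : PdsB (KN 7 4).Adj τ := by
    intro v hv
    have hvS : v ∉ S := by
      intro h; rw [← hτ v] at h; rw [h] at hv; exact Bool.noConfusion hv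
    obtain ⟨u, ⟨huS, hadj⟩, huniq⟩ := hS v hvS
    exact ⟨u, ⟨(hτ u).2 huS, hadj⟩, fun y hy => huniq y ⟨(hτ y).1 hy.1, hy.2⟩⟩
  have Hnbr : ∀ v u, (KN 7 4).Adj v u ↔ u ∈ nbrF v := by decide
  have Hnd : ∀ v : Fin 7 × Fin 4, (nbrF v).Nodup := by decide
  have Hall : ∀ v : Fin 7 × Fin 4, v ∈ allList := by decide
  have hcheck : checkB nbrF allList allList (fun _ => none) = true := by decide
  have := check_sound Hnbr Hnd Hall allList (fun _ => none) hcheck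
    (fun v _ => Hall v) τ (fun v b h => nomatch h) hpds
  rw [Set.eq_univ_iff_forall]
  exact fun v => (hτ v).1 (this v)

theorem stmt11 :
    perfDomNum (KN 7 4) = 28 ∧
    ∀ S : Set (Fin 7 × Fin 4), IsPerfDomSet (KN 7 4) S → S = Set.univ := by
  refine ⟨?_, KN74_unique⟩
  have huniv : IsPerfDomSet (KN 7 4) Set.univ := fun v hv =>
    absurd (Set.mem_univ v) hv
  have hcard : (Set.univ : Set (Fin 7 × Fin 4)).ncard = 28 := by
    rw [Set.ncard_univ, Nat.card_eq_fintype_card]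
    simp
  have hset : {k | ∃ S : Set (Fin 7 × Fin 4), IsPerfDomSet (KN 7 4) S ∧ S.ncard = k}
      = {28} := by
    ext k
    simp only [Set.mem_setOf_eq, Set.mem_singleton_iff]
    constructor
    · rintro ⟨S, hS, rfl⟩
      rw [KN74_unique S hS, hcard]
    · rintro rfl
      exact ⟨Set.univ, huniv, hcard⟩
  rw [perfDomNum, hset, csInf_singleton]
end

section
/- The perfect domination number of the 8×4 knights graph equals 16. -/
/-! ### Auxiliary machinery -/

instance decKA (p q : ℤ × ℤ) : Decidable (knightAdj p q) := by
  unfold knightAdj; infer_instance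

instance decAdj (n m : ℕ) : DecidableRel (KN n m).Adj := fun v u =>
  decKA ((v.1 : ℤ), (v.2 : ℤ)) ((u.1 : ℤ), (u.2 : ℤ))

instance decEU {α : Type*} [Fintype α] [DecidableEq α] (P : α → Prop) [DecidablePred P] :
    Decidable (∃! a, P a) := by unfold ExistsUnique; infer_instance

abbrev V84 := Fin 8 × Fin 4

def b2n (x : Bool) : ℕ := if x then 1 else 0
/-- value at row `j-2` of column `x` (0 if out of range) -/
def at2 (x : Fin 4 → Bool) (j : ℕ) : ℕ :=
  if j = 2 then b2n (x 0) else if j = 3 then b2n (x 1) else if j = 4 then b2n (x 2)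
  else if j = 5 then b2n (x 3) else 0
/-- number of in-set knight-neighbors of the cell at row `j-2` of the middle column,
where `p q s t` are the columns at offsets -2,-1,+1,+2. -/
def cntB (p q s t : Fin 4 → Bool) (j : ℕ) : ℕ :=
  at2 q (j-2) + at2 q (j+2) + at2 s (j-2) + at2 s (j+2) +
  at2 p (j-1) + at2 p (j+1) + at2 t (j-1) + at2 t (j+1)
def okB (p q r s t : Fin 4 → Bool) : Bool :=
  (r 0 || (cntB p q s t 2 == 1)) && (r 1 || (cntB p q s t 3 == 1)) &&
  (r 2 || (cntB p q s t 4 == 1)) && (r 3 || (cntB p q s t 5 == 1))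
def popB (x : Fin 4 → Bool) : ℕ := b2n (x 0) + b2n (x 1) + b2n (x 2) + b2n (x 3)
def cf (m : ℕ) : Fin 4 → Bool := fun b => m / 2 ^ b.val % 2 == 1
def Zc : Fin 4 → Bool := fun _ => false

set_option maxHeartbeats 400000000 in
set_option maxRecDepth 100000 in
set_option synthInstance.maxHeartbeats 2000000 in
set_option synthInstance.maxSize 60000 in
lemma core : ∀ m0 m1 m2 : Fin 16, okB Zc Zc (cf m0.val) (cf m1.val) (cf m2.val) = true →
  ∀ m3 : Fin 16, okB Zc (cf m0.val) (cf m1.val) (cf m2.val) (cf m3.val) = true →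
  ∀ m4 : Fin 16, okB (cf m0.val) (cf m1.val) (cf m2.val) (cf m3.val) (cf m4.val) = true →
  ∀ m5 : Fin 16, okB (cf m1.val) (cf m2.val) (cf m3.val) (cf m4.val) (cf m5.val) = true →
  ∀ m6 : Fin 16, okB (cf m2.val) (cf m3.val) (cf m4.val) (cf m5.val) (cf m6.val) = true →
  ∀ m7 : Fin 16, okB (cf m3.val) (cf m4.val) (cf m5.val) (cf m6.val) (cf m7.val) = true →
  okB (cf m4.val) (cf m5.val) (cf m6.val) (cf m7.val) Zc = true →
  okB (cf m5.val) (cf m6.val) (cf m7.val) Zc Zc = true →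
  16 ≤ popB (cf m0.val) + popB (cf m1.val) + popB (cf m2.val) + popB (cf m3.val) +
       popB (cf m4.val) + popB (cf m5.val) + popB (cf m6.val) + popB (cf m7.val) := by decide

def colN (f : V84 → Bool) (j : ℕ) : Fin 4 → Bool :=
  if h : 2 ≤ j ∧ j < 10 then (fun b => f (⟨j-2, by omega⟩, b)) else fun _ => false

set_option maxHeartbeats 4000000 in
lemma bridge (f : V84 → Bool) (v : V84) :
    (Finset.univ.filter (fun u => (KN 8 4).Adj v u ∧ f u = true)).card
      = cntB (colN f v.1.val) (colN f (v.1.val+1)) (colN f (v.1.val+3)) (colN f (v.1.val+4))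
          (v.2.val+2) := by
  obtain ⟨i, b⟩ := v
  fin_cases i <;> fin_cases b <;>
    (rw [Finset.card_filter]
     simp (config := { decide := true }) [-Finset.sum_boole, Fintype.sum_prod_type,
       Fin.sum_univ_succ, cntB, at2, colN, b2n,
       show Fin.succ (2:Fin 3) = 3 from rfl, show Fin.succ (2:Fin 4) = 3 from rfl, show Fin.succ (2:Fin 5) = 3 from rfl, show Fin.succ (2:Fin 6) = 3 from rfl, show Fin.succ (2:Fin 7) = 3 from rfl, show Fin.succ (3:Fin 4) = 4 from rfl, show Fin.succ (3:Fin 5) = 4 from rfl, show Fin.succ (3:Fin 6) = 4 from rfl, show Fin.succ (3:Fin 7) = 4 from rfl, show Fin.succ (4:Fin 5) = 5 from rfl, show Fin.succ (4:Fin 6) = 5 from rfl, show Fin.succ (4:Fin 7) = 5 from rfl, show Fin.succ (5:Fin 6) = 6 from rfl, show Fin.succ (5:Fin 7) = 6 from rfl, show Fin.succ (6:Fin 7) = 7 from rfl] <;>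
    try ring_nf)

lemma cfbase : ∀ x0 x1 x2 x3 : Bool, ∀ b : Fin 4,
    cf (b2n x0 + 2*b2n x1 + 4*b2n x2 + 8*b2n x3) b = [x0, x1, x2, x3].get b := by decide

lemma popB_cf : ∀ x0 x1 x2 x3 : Bool,
    popB (cf (b2n x0 + 2*b2n x1 + 4*b2n x2 + 8*b2n x3)) = b2n x0 + b2n x1 + b2n x2 + b2n x3 := by
  decide

def maskN (f : V84 → Bool) (i : ℕ) : ℕ :=
  if h : i < 8 then
    b2n (f (⟨i,h⟩,0)) + 2*b2n (f (⟨i,h⟩,1)) + 4*b2n (f (⟨i,h⟩,2)) + 8*b2n (f (⟨i,h⟩,3))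
  else 0

lemma b2n_le (x : Bool) : b2n x ≤ 1 := by cases x <;> simp [b2n]

lemma maskN_lt (f : V84 → Bool) (i : ℕ) : maskN f i < 16 := by
  unfold maskN; split
  · have h0 := b2n_le (f (⟨i, by assumption⟩,0)); have h1 := b2n_le (f (⟨i, by assumption⟩,1))
    have h2 := b2n_le (f (⟨i, by assumption⟩,2)); have h3 := b2n_le (f (⟨i, by assumption⟩,3))
    omega
  · norm_num

lemma colN_zc (f : V84 → Bool) (j : ℕ) (h : ¬ (2 ≤ j ∧ j < 10)) : colN f j = Zc := by
  unfold colN; rw [dif_neg h]; rfl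

lemma colN_cf (f : V84 → Bool) (j : ℕ) (h1 : 2 ≤ j) (h2 : j < 10) :
    colN f j = cf (maskN f (j-2)) := by
  funext b
  unfold colN maskN
  rw [dif_pos ⟨h1, h2⟩, dif_pos (by omega)]
  rw [cfbase]
  fin_cases b <;> rfl

def pdSet : Finset V84 :=
  {(0,1),(0,3),(1,0),(1,2),(2,0),(2,2),(3,1),(3,3),(4,1),(4,3),(5,0),(5,2),(6,0),(6,2),(7,1),(7,3)}

set_option maxHeartbeats 4000000 in
lemma upperPD : ∀ v : V84, v ∉ pdSet → ∃! u, u ∈ pdSet ∧ (KN 8 4).Adj v u := by decide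

lemma pd_isperf : IsPerfDomSet (KN 8 4) ↑pdSet := by
  intro v hv
  have hv' : v ∉ pdSet := by simpa using hv
  obtain ⟨u, hu, huniq⟩ := upperPD v hv'
  exact ⟨u, ⟨by simpa using hu.1, hu.2⟩, fun y hy => huniq y ⟨by simpa using hy.1, hy.2⟩⟩

set_option maxHeartbeats 2000000 in
lemma pd_ncard : (↑pdSet : Set V84).ncard = 16 := by
  rw [Set.ncard_coe_finset]; decide

set_option maxHeartbeats 8000000 in
lemma lower (S : Set V84) (hS : IsPerfDomSet (KN 8 4) S) : 16 ≤ S.ncard := by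
  classical
  set f : V84 → Bool := fun v => decide (v ∈ S) with hf
  have cellFact : ∀ v : V84, f v = false →
      (Finset.univ.filter (fun u => (KN 8 4).Adj v u ∧ f u = true)).card = 1 := by
    intro v hv
    have hvS : v ∉ S := by
      intro hmem
      rw [hf] at hv; simp only [decide_eq_false_iff_not] at hv; exact hv hmem
    obtain ⟨u, ⟨hu1, hu2⟩, huniq⟩ := hS v hvS
    rw [Finset.card_eq_one]
    refine ⟨u, ?_⟩
    ext a
    simp only [Finset.mem_filter, Finset.mem_univ, true_and, Finset.mem_singleton, hf,
      decide_eq_true_eq]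
    constructor
    · rintro ⟨ha1, ha2⟩; exact huniq a ⟨ha2, ha1⟩
    · rintro rfl; exact ⟨hu2, hu1⟩
  have okAll : ∀ (i : ℕ) (h : i < 8),
      okB (colN f i) (colN f (i+1)) (colN f (i+2)) (colN f (i+3)) (colN f (i+4)) = true := by
    intro i h
    have hmid : colN f (i+2) = fun b => f (⟨i, h⟩, b) := by
      funext b
      unfold colN
      rw [dif_pos (by omega)]
      simp
    rw [hmid]
    simp only [okB, Bool.and_eq_true, Bool.or_eq_true, beq_iff_eq, and_assoc]
    refine ⟨?_, ?_, ?_, ?_⟩ <;>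
      [skip; skip; skip; skip]
    case _ =>
      by_cases hb : f (⟨i, h⟩, 0) = true
      · exact Or.inl hb
      · rw [Bool.not_eq_true] at hb
        exact Or.inr ((bridge f (⟨i, h⟩, 0)).symm.trans (cellFact _ hb))
    case _ =>
      by_cases hb : f (⟨i, h⟩, 1) = true
      · exact Or.inl hb
      · rw [Bool.not_eq_true] at hb
        exact Or.inr ((bridge f (⟨i, h⟩, 1)).symm.trans (cellFact _ hb))
    case _ =>
      by_cases hb : f (⟨i, h⟩, 2) = true
      · exact Or.inl hb
      · rw [Bool.not_eq_true] at hb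
        exact Or.inr ((bridge f (⟨i, h⟩, 2)).symm.trans (cellFact _ hb))
    case _ =>
      by_cases hb : f (⟨i, h⟩, 3) = true
      · exact Or.inl hb
      · rw [Bool.not_eq_true] at hb
        exact Or.inr ((bridge f (⟨i, h⟩, 3)).symm.trans (cellFact _ hb))
  -- rewrite the eight instances into mask form
  have h0 := okAll 0 (by omega)
  have h1 := okAll 1 (by omega)
  have h2 := okAll 2 (by omega)
  have h3 := okAll 3 (by omega)
  have h4 := okAll 4 (by omega)
  have h5 := okAll 5 (by omega)
  have h6 := okAll 6 (by omega)
  have h7 := okAll 7 (by omega)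
  simp only [Nat.reduceAdd] at h0 h1 h2 h3 h4 h5 h6 h7
  rw [colN_zc f 0 (by omega), colN_zc f 1 (by omega),
      colN_cf f 2 (by omega) (by omega), colN_cf f 3 (by omega) (by omega),
      colN_cf f 4 (by omega) (by omega)] at h0
  rw [colN_zc f 1 (by omega), colN_cf f 2 (by omega) (by omega),
      colN_cf f 3 (by omega) (by omega), colN_cf f 4 (by omega) (by omega),
      colN_cf f 5 (by omega) (by omega)] at h1
  rw [colN_cf f 2 (by omega) (by omega), colN_cf f 3 (by omega) (by omega),
      colN_cf f 4 (by omega) (by omega), colN_cf f 5 (by omega) (by omega),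
      colN_cf f 6 (by omega) (by omega)] at h2
  rw [colN_cf f 3 (by omega) (by omega), colN_cf f 4 (by omega) (by omega),
      colN_cf f 5 (by omega) (by omega), colN_cf f 6 (by omega) (by omega),
      colN_cf f 7 (by omega) (by omega)] at h3
  rw [colN_cf f 4 (by omega) (by omega), colN_cf f 5 (by omega) (by omega),
      colN_cf f 6 (by omega) (by omega), colN_cf f 7 (by omega) (by omega),
      colN_cf f 8 (by omega) (by omega)] at h4
  rw [colN_cf f 5 (by omega) (by omega), colN_cf f 6 (by omega) (by omega),
      colN_cf f 7 (by omega) (by omega), colN_cf f 8 (by omega) (by omega),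
      colN_cf f 9 (by omega) (by omega)] at h5
  rw [colN_cf f 6 (by omega) (by omega), colN_cf f 7 (by omega) (by omega),
      colN_cf f 8 (by omega) (by omega), colN_cf f 9 (by omega) (by omega),
      colN_zc f 10 (by omega)] at h6
  rw [colN_cf f 7 (by omega) (by omega), colN_cf f 8 (by omega) (by omega),
      colN_cf f 9 (by omega) (by omega), colN_zc f 10 (by omega),
      colN_zc f 11 (by omega)] at h7
  simp only [Nat.reduceSub] at h0 h1 h2 h3 h4 h5 h6 h7
  have hcore :
      16 ≤ popB (cf (maskN f 0)) + popB (cf (maskN f 1)) + popB (cf (maskN f 2)) +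
           popB (cf (maskN f 3)) + popB (cf (maskN f 4)) + popB (cf (maskN f 5)) +
           popB (cf (maskN f 6)) + popB (cf (maskN f 7)) :=
    core ⟨maskN f 0, maskN_lt f 0⟩ ⟨maskN f 1, maskN_lt f 1⟩ ⟨maskN f 2, maskN_lt f 2⟩ h0
      ⟨maskN f 3, maskN_lt f 3⟩ h1 ⟨maskN f 4, maskN_lt f 4⟩ h2 ⟨maskN f 5, maskN_lt f 5⟩ h3
      ⟨maskN f 6, maskN_lt f 6⟩ h4 ⟨maskN f 7, maskN_lt f 7⟩ h5 h6 h7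
  -- identify the sum with S.ncard
  have hSeq : S = ↑(Finset.univ.filter (fun v : V84 => f v = true)) := by
    ext v
    simp [hf]
  have hpop : ∀ (i : ℕ) (h : i < 8), popB (cf (maskN f i)) =
      b2n (f (⟨i,h⟩,0)) + b2n (f (⟨i,h⟩,1)) + b2n (f (⟨i,h⟩,2)) + b2n (f (⟨i,h⟩,3)) := by
    intro i h
    unfold maskN
    rw [dif_pos h, popB_cf]
  have hncard : S.ncard = popB (cf (maskN f 0)) + popB (cf (maskN f 1)) + popB (cf (maskN f 2)) +
      popB (cf (maskN f 3)) + popB (cf (maskN f 4)) + popB (cf (maskN f 5)) +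
      popB (cf (maskN f 6)) + popB (cf (maskN f 7)) := by
    rw [hSeq, Set.ncard_coe_finset, Finset.card_filter]
    rw [hpop 0 (by decide), hpop 1 (by decide), hpop 2 (by decide), hpop 3 (by decide),
        hpop 4 (by decide), hpop 5 (by decide), hpop 6 (by decide), hpop 7 (by decide)]
    rw [Fintype.sum_prod_type]
    rw [Fin.sum_univ_eight]
    simp only [Fin.sum_univ_four, b2n]
    rfl
  rw [hncard]; exact hcore

theorem stmt12 : perfDomNum (KN 8 4) = 16 := by
  have hmem : (16 : ℕ) ∈ {k | ∃ S : Set V84, IsPerfDomSet (KN 8 4) S ∧ S.ncard = k} :=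
    ⟨↑pdSet, pd_isperf, pd_ncard⟩
  refine le_antisymm (Nat.sInf_le hmem) ?_
  refine le_csInf ⟨16, hmem⟩ ?_
  rintro k ⟨S, hS, rfl⟩
  exact lower S hS
end
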